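/- Let a b : α with a ≠ b. For every n ≥ 1, the Levenshtein distance between ([b, a])^n and ([a, b])^n equals 2, i.e., levenshtein (([b, a])^n) (([a, b])^n) = 2. -/

import Mathlib

/-- Mathlib's former `Levenshtein.Cost` (removed from Mathlib since), restored verbatim. -/
structure Levenshtein.Cost (α β δ : Type*) where
  delete : α → δ
  insert : β → δ
  substitute : α → β → δ

/-- Mathlib's former `Levenshtein.defaultCost`. -/
def Levenshtein.defaultCost {α : Type*} [DecidableEq α] : Levenshtein.Cost α α ℕ where
  delete _ := 1
  insert _ := 1
  substitute a b := if a = b then 0 else 1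

/-- Mathlib's former `Levenshtein.impl`. -/
def Levenshtein.impl {α β δ : Type*} [AddZeroClass δ] [Min δ] (C : Levenshtein.Cost α β δ)
    (xs : List α) (y : β) (d : {r : List δ // 0 < r.length}) : {r : List δ // 0 < r.length} :=
  let ⟨ds, w⟩ := d
  xs.zip (ds.zip ds.tail) |>.foldr
    (init := ⟨[C.insert y + ds.getLast (List.ne_nil_of_length_pos w)], by simp⟩)
    (fun ⟨x, d₀, d₁⟩ ⟨r, w⟩ =>
      ⟨min (C.delete x + r[0]) (min (C.insert y + d₀) (C.substitute x y + d₁)) :: r, by simp⟩)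

/-- Mathlib's former `suffixLevenshtein`. -/
def suffixLevenshtein {α β δ : Type*} [AddZeroClass δ] [Min δ] (C : Levenshtein.Cost α β δ)
    (xs : List α) (ys : List β) : {r : List δ // 0 < r.length} :=
  ys.foldr
    (Levenshtein.impl C xs)
    (xs.foldr (init := ⟨[0], by simp⟩) (fun a ⟨r, w⟩ => ⟨(C.delete a + r[0]) :: r, by simp⟩))

/-- Mathlib's former `levenshtein`. -/
def levenshtein {α β δ : Type*} [AddZeroClass δ] [Min δ] (C : Levenshtein.Cost α β δ)
    (xs : List α) (ys : List β) : δ :=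
  let ⟨r, w⟩ := suffixLevenshtein C xs ys
  r[0]

/-- `wpow u k` is the k-fold concatenation `u ++ u ++ ⋯ ++ u` (k copies). -/
def wpow {α : Type*} (u : List α) (k : ℕ) : List α := (List.replicate k u).flatten

namespace Levenshtein

@[simp] theorem defaultCost_delete {α : Type*} [DecidableEq α] (a : α) :
    (Levenshtein.defaultCost : Levenshtein.Cost α α ℕ).delete a = 1 := rfl

@[simp] theorem defaultCost_insert {α : Type*} [DecidableEq α] (a : α) :
    (Levenshtein.defaultCost : Levenshtein.Cost α α ℕ).insert a = 1 := rfl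

@[simp] theorem defaultCost_substitute {α : Type*} [DecidableEq α] (a b : α) :
    (Levenshtein.defaultCost : Levenshtein.Cost α α ℕ).substitute a b = if a = b then 0 else 1 := rfl

section
variable {α β δ : Type*} [AddZeroClass δ] [Min δ] (C : Levenshtein.Cost α β δ)

theorem impl_nil' (y : β) (d : {r : List δ // 0 < r.length}) :
    impl C [] y d = ⟨[C.insert y + d.1.getLast (List.ne_nil_of_length_pos d.2)], by simp⟩ := rfl

theorem impl_cons' (x : α) (xs : List α) (y : β) (d : δ) (ds : List δ)
    (w : 0 < (d :: ds).length) (w' : 0 < ds.length) :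
    impl C (x :: xs) y ⟨d :: ds, w⟩ =
      ⟨min (C.delete x + (impl C xs y ⟨ds, w'⟩).1[0]'(impl C xs y ⟨ds, w'⟩).2)
        (min (C.insert y + d) (C.substitute x y + ds[0])) :: (impl C xs y ⟨ds, w'⟩).1,
        by simp⟩ :=
  match ds, w' with | _ :: _, _ => rfl

theorem lev_eq' (xs : List α) (ys : List β) :
    levenshtein C xs ys = (suffixLevenshtein C xs ys).1[0]'(suffixLevenshtein C xs ys).2 := rfl

theorem suffix_nil' (ys : List β) :
    (suffixLevenshtein C [] ys).1 = [levenshtein C [] ys] := by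
  induction ys with
  | nil => rfl
  | cons y ys ih =>
    have h1 : (suffixLevenshtein C [] (y :: ys)).1 = [C.insert y +
        (suffixLevenshtein C [] ys).1.getLast
          (List.ne_nil_of_length_pos (suffixLevenshtein C [] ys).2)] := rfl
    rw [lev_eq' C [] (y :: ys)]
    simp only [h1, ih, List.getLast_singleton, List.getElem_cons_zero]

theorem levenshtein_nil_nil : levenshtein C [] [] = 0 := rfl

theorem levenshtein_nil_cons (y : β) (ys : List β) :
    levenshtein C [] (y :: ys) = C.insert y + levenshtein C [] ys := by
  have h1 : (suffixLevenshtein C [] (y :: ys)).1 = [C.insert y +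
      (suffixLevenshtein C [] ys).1.getLast
        (List.ne_nil_of_length_pos (suffixLevenshtein C [] ys).2)] := rfl
  rw [lev_eq' C [] (y :: ys)]
  simp only [h1, suffix_nil' C ys, List.getLast_singleton, List.getElem_cons_zero]

theorem levenshtein_cons_nil (x : α) (xs : List α) :
    levenshtein C (x :: xs) [] = C.delete x + levenshtein C xs [] := rfl

theorem suffix_step' (x : α) (xs : List α) (y : β) (ys : List β)
    (h : (suffixLevenshtein C (x :: xs) ys).1 =
      levenshtein C (x :: xs) ys :: (suffixLevenshtein C xs ys).1) :
    (suffixLevenshtein C (x :: xs) (y :: ys)).1 =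
      min (C.delete x + levenshtein C xs (y :: ys))
        (min (C.insert y + levenshtein C (x :: xs) ys) (C.substitute x y + levenshtein C xs ys))
        :: (suffixLevenshtein C xs (y :: ys)).1 := by
  have e : suffixLevenshtein C (x :: xs) ys =
      ⟨levenshtein C (x :: xs) ys :: (suffixLevenshtein C xs ys).1, by simp⟩ := Subtype.ext h
  show (impl C (x :: xs) y (suffixLevenshtein C (x :: xs) ys)).1 = _
  rw [e, impl_cons' C x xs y _ _ _ (suffixLevenshtein C xs ys).2]
  rfl

theorem suffix_cons' (x : α) (xs : List α) (ys : List β) :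
    (suffixLevenshtein C (x :: xs) ys).1 =
      levenshtein C (x :: xs) ys :: (suffixLevenshtein C xs ys).1 := by
  induction ys with
  | nil => rfl
  | cons y ys ih =>
    have key := suffix_step' C x xs y ys ih
    rw [key]
    congr 1
    rw [lev_eq' C (x :: xs) (y :: ys)]
    simp only [key, List.getElem_cons_zero]

theorem levenshtein_cons_cons (x : α) (xs : List α) (y : β) (ys : List β) :
    levenshtein C (x :: xs) (y :: ys) =
      min (C.delete x + levenshtein C xs (y :: ys))
        (min (C.insert y + levenshtein C (x :: xs) ys) (C.substitute x y + levenshtein C xs ys)) := by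
  rw [lev_eq' C (x :: xs) (y :: ys)]
  simp only [suffix_step' C x xs y ys (suffix_cons' C x xs ys), List.getElem_cons_zero]

end

end Levenshtein

namespace StmtAux

open Levenshtein

lemma wpow_succ {α : Type*} (u : List α) (k : ℕ) : wpow u (k + 1) = u ++ wpow u k := by
  simp [wpow, List.replicate_succ]

lemma wpow_succ' {α : Type*} (u : List α) (k : ℕ) : wpow u (k + 1) = wpow u k ++ u := by
  simp [wpow, List.replicate_succ']

lemma length_wpow {α : Type*} (u : List α) (k : ℕ) : (wpow u k).length = k * u.length := by
  induction k with
  | zero => simp [wpow]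
  | succ m ih => rw [wpow_succ]; simp [ih, Nat.succ_mul]; ring

/-- default-cost Levenshtein distance is zero only for equal lists -/
lemma eq_of_lev_zero {α : Type*} [DecidableEq α] :
    ∀ (xs ys : List α), levenshtein Levenshtein.defaultCost xs ys = 0 → xs = ys := by
  intro xs
  induction xs with
  | nil =>
    intro ys
    cases ys with
    | nil => intro _; rfl
    | cons y ys => simp [levenshtein_nil_cons]
  | cons x xs ih =>
    intro ys
    cases ys with
    | nil => simp [levenshtein_cons_nil]
    | cons y ys =>
      intro h
      rw [levenshtein_cons_cons] at h
      simp only [Nat.min_eq_zero_iff, Levenshtein.defaultCost_delete,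
        Levenshtein.defaultCost_insert, Levenshtein.defaultCost_substitute,
        Nat.add_eq_zero] at h
      rcases h with h | h | h
      · omega
      · omega
      · obtain ⟨h1, h2⟩ := h
        by_cases hxy : x = y
        · subst hxy
          rw [ih ys h2]
        · simp [hxy] at h1
  -- done

lemma one_le_lev_of_ne {α : Type*} [DecidableEq α] (xs ys : List α) (h : xs ≠ ys) :
    1 ≤ levenshtein Levenshtein.defaultCost xs ys := by
  rcases Nat.eq_zero_or_pos (levenshtein Levenshtein.defaultCost xs ys) with h0 | h0
  · exact absurd (eq_of_lev_zero xs ys h0) h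
  · exact h0

lemma lev_append_singleton_le {α : Type*} [DecidableEq α] (l : List α) (y : α) :
    levenshtein Levenshtein.defaultCost l (l ++ [y]) ≤ 1 := by
  induction l with
  | nil => simp [levenshtein_nil_cons, levenshtein_nil_nil]
  | cons x l ih =>
    rw [List.cons_append, levenshtein_cons_cons]
    refine le_trans (min_le_right _ _) ?_
    refine le_trans (min_le_right _ _) ?_
    simpa using ih

lemma cons_wpow {α : Type*} (a b : α) :
    ∀ m : ℕ, a :: wpow [b, a] m = wpow [a, b] m ++ [a] := by
  intro m
  induction m with
  | zero => simp [wpow]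
  | succ k ih =>
    rw [wpow_succ, wpow_succ]
    simp only [List.cons_append, List.append_assoc]
    simp [ih]

end StmtAux

open StmtAux in
theorem stmt_14 {α : Type*} [DecidableEq α] (a b : α) (hab : a ≠ b) :
    ∀ n : ℕ, 1 ≤ n →
      levenshtein Levenshtein.defaultCost (wpow [b, a] n) (wpow [a, b] n) = 2 := by
  intro n hn
  obtain ⟨m, rfl⟩ : ∃ m, n = m + 1 := ⟨n - 1, by omega⟩
  rw [wpow_succ [b, a], wpow_succ [a, b]]
  simp only [List.cons_append, List.nil_append]
  rw [Levenshtein.levenshtein_cons_cons]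
  have hRm : a :: wpow [b, a] m = wpow [a, b] m ++ [a] := cons_wpow a b m
  have hSm : b :: wpow [a, b] m = wpow [b, a] m ++ [b] := cons_wpow b a m
  -- T1 : lev (a :: wpow [b,a] m) (a :: b :: wpow [a,b] m) = 1
  have hQ : a :: b :: wpow [a, b] m = (wpow [a, b] m ++ [a]) ++ [b] := by
    have := wpow_succ' [a, b] m
    rw [wpow_succ [a, b]] at this
    simp only [List.cons_append, List.nil_append] at this
    rw [this, List.append_assoc]
    rfl
  have hT1 : levenshtein Levenshtein.defaultCost (a :: wpow [b, a] m)
      (a :: b :: wpow [a, b] m) = 1 := by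
    rw [hRm, hQ]
    refine le_antisymm (lev_append_singleton_le _ _) (one_le_lev_of_ne _ _ ?_)
    intro h
    have := congrArg List.length h
    simp at this
  have hT2 : 1 ≤ levenshtein Levenshtein.defaultCost (b :: a :: wpow [b, a] m)
      (b :: wpow [a, b] m) := by
    refine one_le_lev_of_ne _ _ ?_
    intro h
    have := congrArg List.length h
    simp only [List.length_cons, length_wpow, List.length_append] at this
    omega
  have hT3 : 1 ≤ levenshtein Levenshtein.defaultCost (a :: wpow [b, a] m)
      (b :: wpow [a, b] m) := by
    refine one_le_lev_of_ne _ _ ?_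
    intro h
    exact hab (List.head_eq_of_cons_eq h)
  simp only [Levenshtein.defaultCost_delete, Levenshtein.defaultCost_insert,
    Levenshtein.defaultCost_substitute, if_neg (Ne.symm hab)]
  rw [hT1]
  omega
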